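/- Let N be a finite ground set and let f : Finset N → ℝ be a monotone increasing, submodular set function. Then for any sets S, O ⊆ N, f(S ∪ O) ≤ f(S) + Σ_{x ∈ O \ S} ( f(S ∪ {x}) − f(S) ). -/

import Mathlib

/-- For a monotone increasing, submodular set function `f` on a finite ground set,
`f(S ∪ O) ≤ f(S) + Σ_{x ∈ O \ S} ( f(S ∪ {x}) − f(S) )`. -/
theorem submodular_union_marginal_bound
    {N : Type*} [Fintype N] [DecidableEq N]
    (f : Finset N → ℝ)
    (hmono : ∀ S T : Finset N, S ⊆ T → f S ≤ f T)
    (hsubmod : ∀ S T : Finset N, S ⊆ T → ∀ x ∉ T,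
      f (insert x T) - f T ≤ f (insert x S) - f S)
    (S O : Finset N) :
    f (S ∪ O) ≤ f S + ∑ x ∈ O \ S, (f (insert x S) - f S) := by
  have key : ∀ D : Finset N, Disjoint D S →
      f (S ∪ D) ≤ f S + ∑ x ∈ D, (f (insert x S) - f S) := by
    intro D
    induction D using Finset.induction_on with
    | empty => intro _; simp
    | insert _ _ ha =>
      rename_i a D' ih
      intro hdisj
      have hdisj' : Disjoint D' S := (Finset.disjoint_insert_left.mp hdisj).2
      have haS : a ∉ S := (Finset.disjoint_insert_left.mp hdisj).1
      have haSD : a ∉ S ∪ D' := by simp [haS, ha]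
      have h1 : f (insert a (S ∪ D')) - f (S ∪ D') ≤ f (insert a S) - f S :=
        hsubmod S (S ∪ D') Finset.subset_union_left a haSD
      have h2 := ih hdisj'
      have : S ∪ insert a D' = insert a (S ∪ D') := by
        ext x; simp [or_comm, or_assoc, or_left_comm]
      rw [this, Finset.sum_insert ha]
      linarith
  have h := key (O \ S) (Finset.sdiff_disjoint)
  have : S ∪ (O \ S) = S ∪ O := Finset.union_sdiff_self_eq_union
  rw [this] at h
  exact h
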